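/- Let r ≤ 0 and θ be real numbers and t ∈ [0,1]. Then |1 - e^{(r+iθ)t}|² ≤ (r² + θ²)·t², where e^{(r+iθ)t} is the complex exponential. -/

import Mathlib

theorem stmt_2 (r θ t : ℝ) (hr : r ≤ 0) (ht0 : 0 ≤ t) (ht1 : t ≤ 1) :
    ‖1 - Complex.exp ((r + θ * Complex.I) * t)‖ ^ 2 ≤ (r ^ 2 + θ ^ 2) * t ^ 2 := by
  set z : ℂ := (r + θ * Complex.I) * t with hz
  have hre : z.re = r * t := by simp [hz]
  have him : z.im = θ * t := by simp [hz]
  set x : ℝ := r * t with hx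
  set b : ℝ := θ * t with hb
  have hx0 : x ≤ 0 := mul_nonpos_of_nonpos_of_nonneg hr ht0
  have hexple : Real.exp x ≤ 1 := Real.exp_le_one_iff.mpr hx0
  have hexppos : 0 < Real.exp x := Real.exp_pos x
  have hexpge : x + 1 ≤ Real.exp x := Real.add_one_le_exp x
  have hcos : 1 - b ^ 2 / 2 ≤ Real.cos b := Real.one_sub_sq_div_two_le_cos
  have hcos1 : Real.cos b ≤ 1 := Real.cos_le_one b
  have habs : ‖1 - Complex.exp z‖ ^ 2 =
      (1 - Real.exp x * Real.cos b) ^ 2 + (Real.exp x * Real.sin b) ^ 2 := by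
    rw [Complex.sq_norm, Complex.normSq_apply]
    simp [Complex.exp_re, Complex.exp_im, hre, him]
    ring
  rw [habs]
  have hsc : Real.sin b ^ 2 = 1 - Real.cos b ^ 2 := by
    have := Real.sin_sq_add_cos_sq b; linarith
  have key : (1 - Real.exp x * Real.cos b) ^ 2 + (Real.exp x * Real.sin b) ^ 2
      ≤ x ^ 2 + b ^ 2 := by
    have expand : (1 - Real.exp x * Real.cos b) ^ 2 + (Real.exp x * Real.sin b) ^ 2
        = (1 - Real.exp x) ^ 2 + 2 * Real.exp x * (1 - Real.cos b) := by
      rw [mul_pow, hsc]; ring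
    rw [expand]
    have h1 : (1 - Real.exp x) ^ 2 ≤ x ^ 2 := by nlinarith
    have h2 : 2 * Real.exp x * (1 - Real.cos b) ≤ b ^ 2 := by nlinarith
    linarith
  calc (1 - Real.exp x * Real.cos b) ^ 2 + (Real.exp x * Real.sin b) ^ 2
      ≤ x ^ 2 + b ^ 2 := key
    _ = (r ^ 2 + θ ^ 2) * t ^ 2 := by rw [hx, hb]; ring
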